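/- Let V be a finite-dimensional vector space over a field K, let A ∈ GL(V), N ∈ End(V), and let c ∈ K be an element that is not a root of unity (i.e., c^k ≠ 1 for all k ≥ 1). If A N A⁻¹ = c · N, then N is nilpotent. -/

import Mathlib

open Polynomial

lemma coeff_comp_C_mul_X {K : Type} [Field K] (p : K[X]) (c : K) (i : ℕ) :
    (p.comp (C c * X)).coeff i = c ^ i * p.coeff i := by
  induction p using Polynomial.induction_on' with
  | add p q hp hq => simp [add_comp, hp, hq, mul_add]
  | monomial k a =>
    simp only [monomial_comp, mul_pow, ← C_pow, ← mul_assoc, ← C_mul, coeff_C_mul,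
      coeff_X_pow, coeff_monomial]
    split_ifs with h1 h2 h2 <;> simp_all <;> ring

lemma charpoly_smul_comp {K : Type} [Field K] {n : ℕ} (c : K) (M : Matrix (Fin n) (Fin n) K) :
    (c • M).charpoly.comp (C c * X) = C (c ^ n) * M.charpoly := by
  have key : (Matrix.charmatrix (c • M)).map (aeval (R := K) (C c * X)) =
      (C c) • Matrix.charmatrix M := by
    ext i j
    by_cases hij : i = j
    · subst hij
      simp [Matrix.charmatrix_apply_eq, mul_sub]
    · simp [Matrix.charmatrix_apply_ne _ _ _ hij]
  rw [Matrix.charpoly, Matrix.charpoly, comp_eq_aeval,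
    show (aeval (R := K) (C c * X)) (Matrix.charmatrix (c • M)).det
      = ((Matrix.charmatrix (c • M)).map (aeval (R := K) (C c * X))).det from
      (aeval (R := K) (C c * X)).toRingHom.map_det _,
    key, Matrix.det_smul]
  simp [C_pow]

/-- if `A` is an invertible endomorphism of a finite-dimensional vector
space `V`, `N` an endomorphism, and `c` is not a root of unity, then `A N A⁻¹ = c • N`
forces `N` to be nilpotent. -/
theorem nilpotent_of_twisted_commutation
    {K V : Type} [Field K] [AddCommGroup V] [Module K V] [FiniteDimensional K V]
    (A : (Module.End K V)ˣ) (N : Module.End K V) (c : K)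
    (hc : ∀ k : ℕ, 1 ≤ k → c ^ k ≠ 1)
    (h : (A : Module.End K V) * N * ((A⁻¹ : (Module.End K V)ˣ) : Module.End K V) = c • N) :
    IsNilpotent N := by
  -- recover N from the relation
  have hN : N = c • ((A⁻¹ : (Module.End K V)ˣ) * N * (A : Module.End K V)) := by
    have := congrArg (fun X => ((A⁻¹ : (Module.End K V)ˣ) : Module.End K V) * X *
      (A : Module.End K V)) h
    simpa [mul_assoc, ← mul_assoc, Units.inv_mul, Units.mul_inv, mul_smul_comm,
      smul_mul_assoc] using this
  rcases eq_or_ne c 0 with rfl | hc0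
  · rw [hN, zero_smul]
    exact IsNilpotent.zero
  -- c ≠ 0 case: charpoly argument
  -- the linear equivalence given by A
  let e : V ≃ₗ[K] V := LinearEquiv.ofLinear (A : Module.End K V)
    ((A⁻¹ : (Module.End K V)ˣ) : Module.End K V)
    (by rw [← Module.End.mul_eq_comp, ← Units.val_mul, mul_inv_cancel]; rfl)
    (by rw [← Module.End.mul_eq_comp, ← Units.val_mul, inv_mul_cancel]; rfl)
  have hconj : e.conj N = c • N := by
    rw [← h]
    ext x
    simp [e, LinearEquiv.conj_apply, Module.End.mul_apply]
  have hcp : (c • N).charpoly = N.charpoly := by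
    rw [← hconj]; exact e.charpoly_conj N
  set n := Module.finrank K V with hn
  -- transfer to matrices
  let b := Module.finBasis K V
  have hM : (LinearMap.toMatrix b b N).charpoly = N.charpoly := N.charpoly_toMatrix b
  have hcM : (c • (LinearMap.toMatrix b b N)).charpoly = (c • N).charpoly := by
    rw [← map_smul]; exact (c • N).charpoly_toMatrix b
  have key : N.charpoly.comp (C c * X) = C (c ^ n) * N.charpoly := by
    rw [← hcp, ← hcM, charpoly_smul_comp, hcM, hcp, hM]
  -- coefficient analysis
  have hdeg : N.charpoly.natDegree = n := N.charpoly_natDegree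
  rw [LinearMap.isNilpotent_iff_charpoly]
  ext i
  rw [coeff_X_pow]
  rcases lt_trichotomy i n with hi | hi | hi
  · have hcoeff : c ^ i * N.charpoly.coeff i = c ^ n * N.charpoly.coeff i := by
      have h2 := congrArg (fun p => Polynomial.coeff p i) key
      simp only [coeff_comp_C_mul_X, coeff_C_mul] at h2
      exact h2
    have hne : (c ^ i : K) ≠ c ^ n := by
      intro heq
      have : c ^ (n - i) = 1 := by
        have hpow : c ^ i * c ^ (n - i) = c ^ i * 1 := by
          rw [← pow_add, Nat.add_sub_cancel' hi.le, mul_one, ← heq]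
        exact mul_left_cancel₀ (pow_ne_zero _ hc0) hpow
      exact hc (n - i) (by omega) this
    have : N.charpoly.coeff i = 0 := by
      by_contra hzero
      exact hne (mul_right_cancel₀ hzero hcoeff)
    simp [this, hi.ne, ← hn]
  · rw [hi, if_pos rfl, ← hdeg]
    exact (N.charpoly_monic).coeff_natDegree
  · simp [Polynomial.coeff_eq_zero_of_natDegree_lt (hdeg ▸ hi), hi.ne', ← hn]
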